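/- Let X be a topological space and let f: V₁ → V₂ be a morphism of sheaves of abelian groups on X such that V₁, V₂ and the kernel sheaf ker f are flasque. Then the image sheaf im f and the cokernel sheaf coker f (taken in the abelian category of sheaves of abelian groups on X) are flasque. -/

import Mathlib

open CategoryTheory TopologicalSpace Limits

universe u

/-- A sheaf of abelian groups on a topological space is flasque if all its restriction maps
are surjective. -/
def IsFlasque {X : TopCat.{u}}
    (F : Sheaf (Opens.grothendieckTopology X) AddCommGrpCat.{u}) : Prop :=
  ∀ (U V : Opens X) (h : U ≤ V), Function.Surjective (F.val.map (homOfLE h).op)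

open Opposite

variable {X : TopCat.{u}}

lemma res_congr (F : (Opens X)ᵒᵖ ⥤ AddCommGrpCat.{u}) {U V : Opens X}
    (f g : U ⟶ V) (x : F.obj (op V)) : F.map f.op x = F.map g.op x := by
  rw [Subsingleton.elim f g]

lemma res_res (F : (Opens X)ᵒᵖ ⥤ AddCommGrpCat.{u}) {U V W : Opens X}
    (f : U ⟶ V) (g : V ⟶ W) (h : U ⟶ W) (x : F.obj (op W)) :
    F.map f.op (F.map g.op x) = F.map h.op x := by
  rw [← comp_apply, ← F.map_comp, ← op_comp]
  exact res_congr F _ _ x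

lemma res2 (F : (Opens X)ᵒᵖ ⥤ AddCommGrpCat.{u}) {U V V' W : Opens X}
    (f : U ⟶ V) (g : V ⟶ W) (f' : U ⟶ V') (g' : V' ⟶ W) (x : F.obj (op W)) :
    F.map f.op (F.map g.op x) = F.map f'.op (F.map g'.op x) := by
  rw [res_res F f g (f ≫ g) x, res_res F f' g' (f ≫ g) x]

lemma res_self (F : (Opens X)ᵒᵖ ⥤ AddCommGrpCat.{u}) {U : Opens X}
    (f : U ⟶ U) (x : F.obj (op U)) : F.map f.op x = x := by
  rw [Subsingleton.elim f (𝟙 U)]; simp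

lemma app_res {F G : Sheaf (Opens.grothendieckTopology X) AddCommGrpCat.{u}} (g : F ⟶ G)
    {U V : Opens X} (f : U ⟶ V) (x : F.val.obj (op V)) :
    g.hom.app (op U) (F.val.map f.op x)
      = G.val.map f.op (g.hom.app (op V) x) := by
  have h1 : (F.val.map f.op ≫ g.hom.app (op U)) x
      = (g.hom.app (op V) ≫ G.val.map f.op) x := by
    rw [g.hom.naturality]
  rw [comp_apply, comp_apply] at h1; exact h1

lemma kernel_sections_exact {F G : Sheaf (Opens.grothendieckTopology X) AddCommGrpCat.{u}}
    (g : F ⟶ G) (U : (Opens X)ᵒᵖ) (x : F.val.obj U) (hx : g.hom.app U x = 0) :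
    ∃ y : (kernel g).val.obj U, (kernel.ι g).hom.app U y = x := by
  let E := sheafToPresheaf (Opens.grothendieckTopology X) AddCommGrpCat.{u} ⋙
    (evaluation (Opens X)ᵒᵖ AddCommGrpCat.{u}).obj U
  let h : AddCommGrpCat.of (ULift.{u} ℤ) ⟶ F.val.obj U :=
    AddCommGrpCat.ofHom ((zmultiplesHom _ x).comp AddEquiv.ulift.toAddMonoidHom)
  have w : h ≫ E.map g = 0 := by
    ext (n : ULift.{u} ℤ)
    show g.hom.app U (n.down • x) = 0
    rw [map_zsmul, hx, smul_zero]
  let l := kernel.lift (E.map g) h w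
  refine ⟨(PreservesKernel.iso E g).inv (l (ULift.up (1 : ℤ))), ?_⟩
  have h1 : E.map (kernel.ι g) = (PreservesKernel.iso E g).hom ≫ kernel.ι (E.map g) := by
    rw [PreservesKernel.iso_hom, kernelComparison_comp_ι]
  have h2 : (kernel.ι g).hom.app U ((PreservesKernel.iso E g).inv (l (ULift.up (1 : ℤ))))
      = (((PreservesKernel.iso E g).inv ≫ (PreservesKernel.iso E g).hom ≫
          kernel.ι (E.map g))) (l (ULift.up (1 : ℤ))) := by
    rw [← h1]; rfl
  rw [h2, Iso.inv_hom_id_assoc]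
  have h3 : (kernel.lift (E.map g) h w ≫ kernel.ι (E.map g)) (ULift.up (1 : ℤ))
      = h (ULift.up (1 : ℤ)) := by
    rw [kernel.lift_ι]
  rw [comp_apply] at h3
  rw [h3]
  show (1 : ℤ) • x = x
  exact one_zsmul x

/-- partial lifts for the Zorn argument -/
structure PartialLift (F : Sheaf (Opens.grothendieckTopology X) AddCommGrpCat.{u}) : Type u where
  W : Opens X
  t : F.val.obj (op W)

instance (F : Sheaf (Opens.grothendieckTopology X) AddCommGrpCat.{u}) :
    Preorder (PartialLift F) where
  le p q := ∃ h : p.W ≤ q.W, F.val.map (homOfLE h).op q.t = p.t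
  le_refl p := ⟨le_refl _, res_self _ _ _⟩
  le_trans p q r hpq hqr := by
    obtain ⟨h₁, e₁⟩ := hpq; obtain ⟨h₂, e₂⟩ := hqr
    refine ⟨h₁.trans h₂, ?_⟩
    rw [← res_res F.val (homOfLE h₁) (homOfLE h₂) (homOfLE (h₁.trans h₂)) r.t, e₂, e₁]

lemma sections_surjective {F G : Sheaf (Opens.grothendieckTopology X) AddCommGrpCat.{u}}
    (g : F ⟶ G) [Epi g] (hker : IsFlasque (kernel g)) (U : Opens X) :
    Function.Surjective (g.hom.app (op U)) := by
  intro s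
  haveI hls : Sheaf.IsLocallySurjective g := by
    rw [Sheaf.isLocallySurjective_iff_epi']; infer_instance
  set S : Set (PartialLift F) :=
    {p | ∃ h : p.W ≤ U, g.hom.app (op p.W) p.t = G.val.map (homOfLE h).op s} with hSdef
  have hzorn : ∀ c ⊆ S, IsChain (· ≤ ·) c → ∃ ub ∈ S, ∀ z ∈ c, z ≤ ub := by
    intro c hcS hchain
    let Uf : c → Opens X := fun i => i.1.W
    let sf : ∀ i : c, F.val.obj (op (Uf i)) := fun i => i.1.t
    have compat : TopCat.Presheaf.IsCompatible F.val Uf sf := by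
      intro i j
      rcases eq_or_ne i j with rfl | hij
      · exact res_congr F.val _ _ _
      · rcases hchain i.2 j.2 (fun hh => hij (Subtype.ext hh)) with ⟨h, e⟩ | ⟨h, e⟩
        · rw [show sf i = F.val.map (homOfLE h).op (sf j) from e.symm]
          exact res_res F.val _ _ _ _
        · rw [show sf j = F.val.map (homOfLE h).op (sf i) from e.symm]
          exact (res_res F.val _ _ _ _).symm
    obtain ⟨gl, hgl, -⟩ :=
      (show TopCat.Sheaf AddCommGrpCat X from F).existsUnique_gluing Uf sf compat
    have hsup : iSup Uf ≤ U := iSup_le fun i => (hcS i.2).choose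
    refine ⟨⟨iSup Uf, gl⟩, ⟨hsup, ?_⟩, ?_⟩
    · apply TopCat.Sheaf.eq_of_locally_eq (show TopCat.Sheaf AddCommGrpCat X from G) Uf
      intro i
      obtain ⟨hiU, hit⟩ := hcS i.2
      rw [← app_res g (Opens.leSupr Uf i) gl, hgl i, hit,
        res_res G.val (Opens.leSupr Uf i) (homOfLE hsup) (homOfLE hiU) s]
    · intro z hz
      refine ⟨le_iSup Uf ⟨z, hz⟩, ?_⟩
      rw [res_congr F.val _ (Opens.leSupr Uf ⟨z, hz⟩)]
      exact hgl ⟨z, hz⟩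
  obtain ⟨m, hmax⟩ := zorn_le₀ S hzorn
  obtain ⟨hWU, hmt⟩ := hmax.1
  have hUW : U ≤ m.W := by
    intro x hx
    obtain ⟨W', incl, hsieve, hxW'⟩ :=
      Presheaf.imageSieve_mem (Opens.grothendieckTopology X) g.hom s x hx
    obtain ⟨t', ht'⟩ := hsieve
    by_contra hxm
    set W := m.W with hW
    set Wi := W ⊓ W' with hWi
    set d : F.val.obj (op Wi) := F.val.map (homOfLE inf_le_left).op m.t
      - F.val.map (homOfLE inf_le_right).op t' with hd
    have hd0 : g.hom.app (op Wi) d = 0 := by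
      rw [hd, map_sub, app_res, app_res, hmt, ht',
        res_res G.val (homOfLE inf_le_left) (homOfLE hWU) (homOfLE (inf_le_left.trans hWU)) s,
        res_res G.val (homOfLE inf_le_right) incl (homOfLE (inf_le_left.trans hWU)) s,
        sub_self]
    obtain ⟨k, hk⟩ := kernel_sections_exact g (op Wi) d hd0
    obtain ⟨k', hk'⟩ := hker Wi W' inf_le_right k
    set t'' : F.val.obj (op W') := t' + (kernel.ι g).hom.app (op W') k' with ht''
    have key : F.val.map (homOfLE (inf_le_left : Wi ≤ W)).op m.t
        = F.val.map (homOfLE (inf_le_right : Wi ≤ W')).op t'' := by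
      rw [ht'', map_add, ← app_res (kernel.ι g) (homOfLE inf_le_right) k', hk', hk, hd]
      abel
    -- glue m.t and t'' over W ⊔ W'
    let Uf : ULift.{u} Bool → Opens X := fun b => Bool.rec W' W b.down
    let sf : ∀ b, F.val.obj (op (Uf b)) :=
      fun b => Bool.rec (motive := fun c => F.val.obj (op (Uf ⟨c⟩))) t'' m.t b.down
    let iUV : ∀ b, Uf b ⟶ W ⊔ W' :=
      fun b => Bool.rec (motive := fun c => Uf ⟨c⟩ ⟶ W ⊔ W')
        (homOfLE le_sup_right) (homOfLE le_sup_left) b.down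
    have hcover : W ⊔ W' ≤ iSup Uf := sup_le (le_iSup Uf ⟨true⟩) (le_iSup Uf ⟨false⟩)
    have compat : TopCat.Presheaf.IsCompatible F.val Uf sf := by
      intro i j
      obtain ⟨i⟩ := i; obtain ⟨j⟩ := j
      cases i <;> cases j
      · exact res_congr F.val _ _ _
      · -- (false, true) : t'' vs m.t over W' ⊓ W
        have h1 : ((W' : Opens X) ⊓ W) ≤ Wi := le_inf inf_le_right inf_le_left
        calc F.val.map ((Uf ⟨false⟩).infLELeft (Uf ⟨true⟩)).op (sf ⟨false⟩)
            = F.val.map (homOfLE h1).op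
                (F.val.map (homOfLE (inf_le_right : Wi ≤ W')).op t'') :=
              (res_res F.val _ _ _ _).symm
          _ = F.val.map (homOfLE h1).op
                (F.val.map (homOfLE (inf_le_left : Wi ≤ W)).op m.t) := by rw [← key]
          _ = F.val.map ((Uf ⟨false⟩).infLERight (Uf ⟨true⟩)).op (sf ⟨true⟩) :=
              res_res F.val _ _ _ _
      · -- (true, false) : m.t vs t'' over W ⊓ W'
        calc F.val.map ((Uf ⟨true⟩).infLELeft (Uf ⟨false⟩)).op (sf ⟨true⟩)
            = F.val.map (homOfLE (inf_le_left : Wi ≤ W)).op m.t := res_congr F.val _ _ _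
          _ = F.val.map (homOfLE (inf_le_right : Wi ≤ W')).op t'' := key
          _ = F.val.map ((Uf ⟨true⟩).infLERight (Uf ⟨false⟩)).op (sf ⟨false⟩) :=
              res_congr F.val _ _ _
      · exact res_congr F.val _ _ _
    obtain ⟨gl, hgl, -⟩ := (show TopCat.Sheaf AddCommGrpCat X from F).existsUnique_gluing'
      Uf (W ⊔ W') iUV hcover sf compat
    have hsupU : W ⊔ W' ≤ U := sup_le hWU (leOfHom incl)
    have hmem : (⟨W ⊔ W', gl⟩ : PartialLift F) ∈ S := by
      refine ⟨hsupU, ?_⟩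
      apply TopCat.Sheaf.eq_of_locally_eq' (show TopCat.Sheaf AddCommGrpCat X from G)
        Uf (W ⊔ W') iUV hcover
      intro i
      obtain ⟨i⟩ := i
      cases i
      · -- over W'
        rw [← app_res g (iUV ⟨false⟩) gl, hgl ⟨false⟩]
        show g.hom.app (op W') t'' = _
        have hz : g.hom.app (op W') ((kernel.ι g).hom.app (op W') k') = 0 := by
          have hc : (kernel.ι g ≫ g).hom.app (op W') k'
              = g.hom.app (op W') ((kernel.ι g).hom.app (op W') k') := rfl
          rw [kernel.condition g] at hc
          rw [← hc]
          show ((sheafToPresheaf _ _).map (0 : kernel g ⟶ G)).app (op W') k' = 0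
          rw [Functor.map_zero]
          rfl
        rw [ht'', map_add, hz, add_zero, ht',
          res_res G.val (iUV ⟨false⟩) (homOfLE hsupU) incl s]
      · -- over W
        rw [← app_res g (iUV ⟨true⟩) gl, hgl ⟨true⟩]
        show g.hom.app (op W) m.t = _
        rw [hmt, res_res G.val (iUV ⟨true⟩) (homOfLE hsupU) (homOfLE hWU) s]
    have hle : m ≤ ⟨W ⊔ W', gl⟩ := by
      refine ⟨le_sup_left, ?_⟩
      rw [res_congr F.val _ (iUV ⟨true⟩)]
      exact hgl ⟨true⟩
    obtain ⟨hle', -⟩ := hmax.2 hmem hle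
    exact hxm (hle' ((le_sup_right : W' ≤ W ⊔ W') hxW'))
  refine ⟨F.val.map (homOfLE hUW).op m.t, ?_⟩
  rw [app_res g (homOfLE hUW) m.t, hmt,
    res_res G.val (homOfLE hUW) (homOfLE hWU) (𝟙 U) s]
  simp

lemma isFlasque_of_iso {F G : Sheaf (Opens.grothendieckTopology X) AddCommGrpCat.{u}}
    (e : F ≅ G) (hF : IsFlasque F) : IsFlasque G := by
  intro U V hUV s
  obtain ⟨t, ht⟩ := hF U V hUV (e.inv.hom.app (op U) s)
  refine ⟨e.hom.hom.app (op V) t, ?_⟩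
  rw [← app_res e.hom (homOfLE hUV) t, ht]
  have : (e.inv ≫ e.hom).hom.app (op U) s = e.hom.hom.app (op U) (e.inv.hom.app (op U) s) := rfl
  rw [← this, Iso.inv_hom_id]
  rfl

/-- If `f : V₁ ⟶ V₂` is a morphism of sheaves of abelian groups on a
topological space such that `V₁`, `V₂` and `ker f` are flasque, then `im f` and `coker f`
are flasque. -/
theorem stmt4 {X : TopCat.{u}}
    {V₁ V₂ : Sheaf (Opens.grothendieckTopology X) AddCommGrpCat.{u}} (f : V₁ ⟶ V₂)
    (h₁ : IsFlasque V₁) (h₂ : IsFlasque V₂) (hker : IsFlasque (kernel f)) :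
    IsFlasque (image f) ∧ IsFlasque (cokernel f) := by
  have hkerim : IsFlasque (kernel (factorThruImage f)) := by
    refine isFlasque_of_iso ?_ hker
    exact (kernelIsoOfEq (image.fac f).symm) ≪≫
      kernelCompMono (factorThruImage f) (image.ι f)
  have him : IsFlasque (image f) := by
    intro U V hUV s
    obtain ⟨t, ht⟩ := sections_surjective (factorThruImage f) hkerim U s
    obtain ⟨t', ht'⟩ := h₁ U V hUV t
    refine ⟨(factorThruImage f).hom.app (op V) t', ?_⟩
    rw [← app_res (factorThruImage f) (homOfLE hUV) t', ht', ht]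
  refine ⟨him, ?_⟩
  have hkercoker : IsFlasque (kernel (cokernel.π f)) :=
    isFlasque_of_iso (Abelian.imageIsoImage f).symm him
  intro U V hUV s
  obtain ⟨t, ht⟩ := sections_surjective (cokernel.π f) hkercoker U s
  obtain ⟨t', ht'⟩ := h₂ U V hUV t
  refine ⟨(cokernel.π f).hom.app (op V) t', ?_⟩
  rw [← app_res (cokernel.π f) (homOfLE hUV) t', ht', ht]
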